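/- Let (X,d) be a T₁ quasi-metric space in which forward convergence implies backward convergence. If every closed discrete subset of (X,d) is uniformly discrete, then (X,d) is a UC space. -/
import Mathlib


open Filter Topology Set

structure IsQuasiMetric {X : Type*} (d : X → X → ℝ) : Prop where
  nonneg : ∀ x y, 0 ≤ d x y
  refl : ∀ x, d x x = 0
  eq_of_both_zero : ∀ x y, d x y = 0 → d y x = 0 → x = y
  triangle : ∀ x y z, d x y ≤ d x z + d z y

/-- The forward topology generated by forward balls `B⁺(x,ε) = {y | d x y < ε}`. -/
def forwardTopology {X : Type*} (d : X → X → ℝ) : TopologicalSpace X :=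
  TopologicalSpace.generateFrom {S | ∃ x : X, ∃ ε : ℝ, 0 < ε ∧ S = {y | d x y < ε}}

/-- `s` forward converges to `x`: `d x (s n) → 0`. -/
def ForwardConv {X : Type*} (d : X → X → ℝ) (s : ℕ → X) (x : X) : Prop :=
  ∀ ε > (0:ℝ), ∃ N : ℕ, ∀ n ≥ N, d x (s n) < ε

/-- `s` backward converges to `x`: `d (s n) x → 0`. -/
def BackwardConv {X : Type*} (d : X → X → ℝ) (s : ℕ → X) (x : X) : Prop :=
  ∀ ε > (0:ℝ), ∃ N : ℕ, ∀ n ≥ N, d (s n) x < ε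

/-- `x` is a cluster point of `s`: some subsequence forward converges to `x`. -/
def IsClusterPointOf {X : Type*} (d : X → X → ℝ) (s : ℕ → X) (x : X) : Prop :=
  ∃ φ : ℕ → ℕ, StrictMono φ ∧ ForwardConv d (s ∘ φ) x

def LeftKCauchy {X : Type*} (d : X → X → ℝ) (s : ℕ → X) : Prop :=
  ∀ ε > (0:ℝ), ∃ n₀ : ℕ, ∀ k n : ℕ, n₀ ≤ k → k ≤ n → d (s k) (s n) < ε

/-- `s` is forward parallel to `t`. -/
def ForwardParallel {X : Type*} (d : X → X → ℝ) (s t : ℕ → X) : Prop :=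
  ∀ ε > (0:ℝ), ∃ N : ℕ, ∀ n ≥ N, d (s n) (t n) < ε

/-- Forward continuity for real-valued functions (ε-δ form). -/
def ForwardContinuous {X : Type*} (d : X → X → ℝ) (f : X → ℝ) : Prop :=
  ∀ x₀ : X, ∀ ε > (0:ℝ), ∃ δ > (0:ℝ), ∀ y, d x₀ y < δ → |f x₀ - f y| < ε

/-- Uniform continuity for real-valued functions. -/
def UniformlyCont {X : Type*} (d : X → X → ℝ) (f : X → ℝ) : Prop :=
  ∀ ε > (0:ℝ), ∃ δ > (0:ℝ), ∀ x y, d x y < δ → |f x - f y| < ε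

/-- `(X,d)` is a UC quasi-metric space. -/
def IsUC {X : Type*} (d : X → X → ℝ) : Prop :=
  ∀ f : X → ℝ, ForwardContinuous d f → UniformlyCont d f

/-- Distance between two sets: `inf {d a b | a ∈ A, b ∈ B}`. -/
noncomputable def setDist {X : Type*} (d : X → X → ℝ) (A B : Set X) : ℝ :=
  sInf {r : ℝ | ∃ a ∈ A, ∃ b ∈ B, d a b = r}

/- ---------- auxiliary material ---------- -/

/-- A positive lower bound for finitely many positive reals. -/
lemma exists_pos_lb (g : ℕ → ℝ) (hg : ∀ k, 0 < g k) (N : ℕ) :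
    ∃ m > (0:ℝ), ∀ k ≤ N, m ≤ g k := by
  induction N with
  | zero =>
    exact ⟨g 0, hg 0, fun k hk => by rw [Nat.le_zero.mp hk]⟩
  | succ n ih =>
    obtain ⟨m, hm, hmle⟩ := ih
    refine ⟨min m (g (n+1)), lt_min hm (hg _), fun k hk => ?_⟩
    rcases Nat.lt_succ_iff_lt_or_eq.mp (Nat.lt_succ_of_le hk) with h | h
    · exact le_trans (min_le_left _ _) (hmle k (Nat.lt_succ_iff.mp h))
    · rw [h]; exact min_le_right _ _

/-- If every point has a forward ball meeting `A` only possibly in itself,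
then `A` is closed in the forward topology. -/
lemma key_closed {X : Type*} (d : X → X → ℝ) (hrefl : ∀ x, d x x = 0)
    (A : Set X) (key : ∀ a : X, ∃ ε > (0:ℝ), ∀ z ∈ A, d a z < ε → z = a) :
    @IsClosed X (forwardTopology d) A := by
  letI := forwardTopology d
  rw [← isOpen_compl_iff]
  choose ε hε hεA using key
  have hA : Aᶜ = ⋃ q ∈ Aᶜ, {z | d q z < ε q} := by
    ext z
    simp only [Set.mem_iUnion, Set.mem_setOf_eq]
    constructor
    · intro hz
      exact ⟨z, hz, by rw [hrefl]; exact hε z⟩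
    · rintro ⟨q, hq, hdz⟩ hzA
      exact hq ((hεA q z hzA hdz) ▸ hzA)
  rw [hA]
  exact isOpen_biUnion fun q _ =>
    TopologicalSpace.GenerateOpen.basic _ ⟨q, ε q, hε q, rfl⟩

/-- Iterated choice function, used for subsequence extraction. -/
def iterSeq (g : ℕ → ℕ) : ℕ → ℕ
  | 0 => g 0
  | (k+1) => g (max (iterSeq g k) (k+1))

/-- if every closed discrete subset is uniformly discrete, then `(X,d)` is UC. -/
theorem isUC_of_uniformly_discrete {X : Type*} (d : X → X → ℝ) (hd : IsQuasiMetric d)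
    (hT1 : ∀ x y : X, x ≠ y → 0 < d x y)
    (hfb : ∀ (s : ℕ → X) (x : X), ForwardConv d s x → BackwardConv d s x)
    (h : ∀ A : Set X, @IsClosed X (forwardTopology d) A →
      (∀ a ∈ A, ∃ ε > (0:ℝ), ∀ y ∈ A, d a y < ε → y = a) →
      ∃ δ > (0:ℝ), ∀ x ∈ A, ∀ y ∈ A, x ≠ y → δ ≤ d x y) :
    IsUC d := by
  classical
  intro f hf
  by_contra hUC
  unfold UniformlyCont at hUC
  push_neg at hUC
  obtain ⟨ε₀, hε₀, hw⟩ := hUC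
  choose u v huv hfuv using fun n : ℕ => hw (1/((n:ℝ)+1)) (by positivity)
  -- No point is a forward cluster point of the sequence `u`.
  have GC : ∀ a : X, ∃ ε > (0:ℝ), {n : ℕ | d a (u n) < ε}.Finite := by
    intro a
    by_contra hcon
    push_neg at hcon
    obtain ⟨δ, hδ, hδf⟩ := hf a (ε₀/2) (by linarith)
    obtain ⟨N, hN⟩ := exists_nat_one_div_lt (show (0:ℝ) < δ/2 by linarith)
    have hinf : {n : ℕ | d a (u n) < δ/2}.Infinite := hcon (δ/2) (by linarith)
    obtain ⟨n, hn, hgt⟩ := hinf.exists_gt N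
    have h1 : 1/((n:ℝ)+1) ≤ 1/((N:ℝ)+1) := by
      apply one_div_le_one_div_of_le (by positivity)
      have : (N:ℝ) ≤ (n:ℝ) := Nat.cast_le.mpr (le_of_lt hgt)
      linarith
    have h2 := hd.triangle a (v n) (u n)
    have h3 : d a (u n) < δ := by
      have : (0:ℝ) < δ/2 := by linarith
      calc d a (u n) < δ/2 := hn
        _ < δ := by linarith
    have h4 : d a (v n) < δ := by
      have := huv n
      have hn' : d a (u n) < δ/2 := hn
      calc d a (v n) ≤ d a (u n) + d (u n) (v n) := h2
        _ < δ/2 + 1/((N:ℝ)+1) := by linarith [huv n]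
        _ < δ := by linarith
    have h5 := hδf (u n) h3
    have h6 := hδf (v n) h4
    have h7 : |f (u n) - f (v n)| ≤ |f (u n) - f a| + |f a - f (v n)| :=
      abs_sub_le _ _ _
    rw [abs_sub_comm (f (u n)) (f a)] at h7
    have := hfuv n
    linarith
  by_cases hcy : ∀ p : X, ∃ ε > (0:ℝ), {n : ℕ | d p (v n) < ε}.Finite
  · -- Case 1: also no forward cluster point of `v`.  The whole set of witnesses
    -- is closed and discrete, hence uniformly discrete: contradiction.
    set A₀ : Set X := Set.range u ∪ Set.range v with hA₀
    have key : ∀ a : X, ∃ ε > (0:ℝ), ∀ z ∈ A₀, d a z < ε → z = a := by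
      intro a
      obtain ⟨εx, hεx, hFx⟩ := GC a
      obtain ⟨εy, hεy, hFy⟩ := hcy a
      obtain ⟨Nx, hNx⟩ := hFx.bddAbove
      obtain ⟨Ny, hNy⟩ := hFy.bddAbove
      obtain ⟨mx, hmx, hmxle⟩ := exists_pos_lb
        (fun n => if hne : u n = a then 1 else d a (u n))
        (fun k => by
          by_cases hne : u k = a
          · simp [hne]
          · simp only [hne, dif_neg, not_false_iff]
            exact hT1 a (u k) (fun hh => hne hh.symm)) Nx
      obtain ⟨my, hmy, hmyle⟩ := exists_pos_lb
        (fun n => if hne : v n = a then 1 else d a (v n))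
        (fun k => by
          by_cases hne : v k = a
          · simp [hne]
          · simp only [hne, dif_neg, not_false_iff]
            exact hT1 a (v k) (fun hh => hne hh.symm)) Ny
      refine ⟨min (min εx εy) (min mx my),
        lt_min (lt_min hεx hεy) (lt_min hmx hmy), ?_⟩
      rintro z (⟨n, rfl⟩ | ⟨n, rfl⟩) hdz
      · by_contra hne
        have h1 : d a (u n) < εx :=
          lt_of_lt_of_le hdz (le_trans (min_le_left _ _) (min_le_left _ _))
        have h2 : n ≤ Nx := hNx h1
        have h3 := hmxle n h2
        rw [dif_neg hne] at h3
        have : min (min εx εy) (min mx my) ≤ d a (u n) :=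
          le_trans (le_trans (min_le_right _ _) (min_le_left _ _)) h3
        linarith
      · by_contra hne
        have h1 : d a (v n) < εy :=
          lt_of_lt_of_le hdz (le_trans (min_le_left _ _) (min_le_right _ _))
        have h2 : n ≤ Ny := hNy h1
        have h3 := hmyle n h2
        rw [dif_neg hne] at h3
        have : min (min εx εy) (min mx my) ≤ d a (v n) :=
          le_trans (le_trans (min_le_right _ _) (min_le_right _ _)) h3
        linarith
    obtain ⟨δ, hδ, hδA⟩ := h A₀ (key_closed d hd.refl A₀ key) (fun a _ => key a)
    obtain ⟨n, hn⟩ := exists_nat_one_div_lt hδ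
    by_cases he : u n = v n
    · have := hfuv n
      rw [he, sub_self, abs_zero] at this
      linarith
    · have := hδA (u n) (Or.inl ⟨n, rfl⟩) (v n) (Or.inr ⟨n, rfl⟩) he
      have := huv n
      have h1 : 1/((n:ℝ)+1) ≤ 1/((n:ℝ)+1) := le_refl _
      linarith
  · -- Case 2: some point `p` is a forward cluster point of `v`.
    push_neg at hcy
    obtain ⟨p, hp⟩ := hcy
    obtain ⟨ε₁, hε₁, hJ⟩ := GC p
    obtain ⟨N₁, hN₁⟩ := hJ.bddAbove
    have step : ∀ m : ℕ, ∃ n, m < n ∧ d p (v n) < 1/((m:ℝ)+1) ∧ ε₁ ≤ d p (u n) := by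
      intro m
      have hinf : {n : ℕ | d p (v n) < 1/((m:ℝ)+1)}.Infinite :=
        hp (1/((m:ℝ)+1)) (by positivity)
      obtain ⟨n, hn, hgt⟩ := hinf.exists_gt (max m N₁)
      refine ⟨n, lt_of_le_of_lt (le_max_left _ _) hgt, hn, ?_⟩
      by_contra hlt
      push_neg at hlt
      have h1 : n ≤ N₁ := hN₁ hlt
      have h2 : N₁ < n := lt_of_le_of_lt (le_max_right m N₁) hgt
      omega
    choose g hg1 hg2 hg3 using step
    set φ : ℕ → ℕ := iterSeq g with hφ
    have hφprop : ∀ k : ℕ, k ≤ φ k ∧ d p (v (φ k)) < 1/((k:ℝ)+1) := by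
      intro k
      induction k with
      | zero =>
        refine ⟨Nat.zero_le _, ?_⟩
        have := hg2 0
        simpa [hφ, iterSeq] using this
      | succ k ih =>
        have hmax : k + 1 ≤ max (φ k) (k+1) := le_max_right _ _
        have heq : φ (k+1) = g (max (φ k) (k+1)) := rfl
        constructor
        · rw [heq]
          exact le_of_lt (lt_of_le_of_lt hmax (hg1 _))
        · rw [heq]
          refine lt_of_lt_of_le (hg2 (max (φ k) (k+1))) ?_
          apply one_div_le_one_div_of_le (by positivity)
          have : ((k+1:ℕ):ℝ) ≤ ((max (φ k) (k+1) : ℕ):ℝ) := Nat.cast_le.mpr hmax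
          push_cast at this ⊢
          linarith
    have hφge : ∀ k, k ≤ φ k := fun k => (hφprop k).1
    have hφv : ∀ k, d p (v (φ k)) < 1/((k:ℝ)+1) := fun k => (hφprop k).2
    have hφu : ∀ k, ε₁ ≤ d p (u (φ k)) := by
      intro k
      cases k with
      | zero => exact hg3 0
      | succ k => exact hg3 (max (φ k) (k+1))
    set A : Set X := insert p (Set.range fun k => u (φ k)) with hA
    have key : ∀ a : X, ∃ ε > (0:ℝ), ∀ z ∈ A, d a z < ε → z = a := by
      intro a
      obtain ⟨εa, hεa, hFa⟩ := GC a
      obtain ⟨Na, hNa⟩ := hFa.bddAbove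
      obtain ⟨mx, hmx, hmxle⟩ := exists_pos_lb
        (fun k => if hne : u (φ k) = a then 1 else d a (u (φ k)))
        (fun k => by
          by_cases hne : u (φ k) = a
          · simp [hne]
          · simp only [hne, dif_neg, not_false_iff]
            exact hT1 a (u (φ k)) (fun hh => hne hh.symm)) Na
      have hmp : (0:ℝ) < if hne : p = a then 1 else d a p := by
        by_cases hne : p = a
        · simp [hne]
        · simp only [hne, dif_neg, not_false_iff]
          exact hT1 a p (fun hh => hne hh.symm)
      refine ⟨min εa (min (if hne : p = a then 1 else d a p) mx),
        lt_min hεa (lt_min hmp hmx), ?_⟩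
      rintro z (rfl | ⟨k, rfl⟩) hdz
      · by_contra hne
        rw [dif_neg hne] at hdz
        have : min εa (min (d a z) mx) ≤ d a z :=
          le_trans (min_le_right _ _) (min_le_left _ _)
        linarith
      · by_contra hne
        have h1 : d a (u (φ k)) < εa := lt_of_lt_of_le hdz (min_le_left _ _)
        have h2 : φ k ≤ Na := hNa h1
        have h3 : k ≤ Na := le_trans (hφge k) h2
        have h4 := hmxle k h3
        rw [dif_neg hne] at h4
        have : min εa (min (if hne : p = a then 1 else d a p) mx) ≤ d a (u (φ k)) :=
          le_trans (le_trans (min_le_right _ _) (min_le_right _ _)) h4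
        linarith
    obtain ⟨δ, hδ, hδA⟩ := h A (key_closed d hd.refl A key) (fun a _ => key a)
    -- the subsequence of `v` forward converges to `p`
    have hFC : ForwardConv d (fun k => v (φ k)) p := by
      intro ε hε
      obtain ⟨N, hN⟩ := exists_nat_one_div_lt hε
      refine ⟨N, fun n hn => ?_⟩
      refine lt_of_lt_of_le (hφv n) (le_trans ?_ (le_of_lt hN))
      apply one_div_le_one_div_of_le (by positivity)
      have : (N:ℝ) ≤ (n:ℝ) := Nat.cast_le.mpr hn
      linarith
    have hBC := hfb _ _ hFC
    obtain ⟨K, hK⟩ := hBC (δ/2) (by linarith)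
    obtain ⟨M, hM⟩ := exists_nat_one_div_lt (show (0:ℝ) < δ/2 by linarith)
    set k := max K M with hk
    have h1 : d (v (φ k)) p < δ/2 := hK k (le_max_left _ _)
    have h2 : d (u (φ k)) (v (φ k)) < 1/((φ k:ℝ)+1) := huv (φ k)
    have h3 : 1/((φ k:ℝ)+1) ≤ 1/((M:ℝ)+1) := by
      apply one_div_le_one_div_of_le (by positivity)
      have : (M:ℝ) ≤ ((φ k):ℝ) :=
        Nat.cast_le.mpr (le_trans (le_max_right K M) (hφge k))
      linarith
    have h4 : d (u (φ k)) p < δ := by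
      calc d (u (φ k)) p ≤ d (u (φ k)) (v (φ k)) + d (v (φ k)) p :=
            hd.triangle _ _ _
        _ < 1/((M:ℝ)+1) + δ/2 := by linarith
        _ < δ/2 + δ/2 := by linarith
        _ = δ := by ring
    have hne : u (φ k) ≠ p := by
      intro hh
      have := hφu k
      rw [hh, hd.refl] at this
      linarith
    have := hδA (u (φ k)) (Or.inr ⟨k, rfl⟩) p (Or.inl rfl) hne
    linarith
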